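/- Pairs (ζ, α) of functions satisfying -2α' = C + bζ and αζ' = -bζ² + (2B - C)ζ, with ζ nowhere zero, also satisfy the second-order system ζ(αζ'' - α'ζ' - Cζ') - α(ζ')² = 0 and ζ(-2α''ζ + αζ'' + α'ζ') - α(ζ')² = 0. -/
import Mathlib


theorem first_order_implies_second_order_system
    (I : Set ℝ) (hI : IsOpen I)
    (ζ ζ' ζ'' α α' α'' : ℝ → ℝ) (b B C : ℝ)
    (hζd : ∀ z ∈ I, HasDerivAt ζ (ζ' z) z)
    (hζd2 : ∀ z ∈ I, HasDerivAt ζ' (ζ'' z) z)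
    (hαd : ∀ z ∈ I, HasDerivAt α (α' z) z)
    (hαd2 : ∀ z ∈ I, HasDerivAt α' (α'' z) z)
    (hζne : ∀ z ∈ I, ζ z ≠ 0)
    (heq1 : ∀ z ∈ I, -2 * α' z = C + b * ζ z)
    (heq2 : ∀ z ∈ I, α z * ζ' z = -b * (ζ z) ^ 2 + (2 * B - C) * ζ z) :
    ∀ z ∈ I,
      ζ z * (α z * ζ'' z - α' z * ζ' z - C * ζ' z) = α z * (ζ' z) ^ 2 ∧
      ζ z * (-2 * α'' z * ζ z + α z * ζ'' z + α' z * ζ' z) = α z * (ζ' z) ^ 2 := by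
  intro z hz
  have hmem : I ∈ nhds z := hI.mem_nhds hz
  -- derivative of eq1
  have hL1 : HasDerivAt (fun x => -2 * α' x) (-2 * α'' z) z :=
    (hαd2 z hz).const_mul (-2)
  have hR1 : HasDerivAt (fun x => C + b * ζ x) (b * ζ' z) z :=
    ((hζd z hz).const_mul b).const_add C
  have hEq1 : (fun x => -2 * α' x) =ᶠ[nhds z] (fun x => C + b * ζ x) :=
    Filter.eventually_of_mem hmem (fun x hx => heq1 x hx)
  have e1 : -2 * α'' z = b * ζ' z :=
    (hL1.congr_of_eventuallyEq hEq1.symm).unique hR1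
  -- derivative of eq2
  have hL2 : HasDerivAt (fun x => α x * ζ' x) (α' z * ζ' z + α z * ζ'' z) z :=
    (hαd z hz).mul (hζd2 z hz)
  have hR2 : HasDerivAt (fun x => -b * (ζ x) ^ 2 + (2 * B - C) * ζ x)
      (-b * (2 * ζ z ^ 1 * ζ' z) + (2 * B - C) * ζ' z) z :=
    (((hζd z hz).pow 2).const_mul (-b)).add ((hζd z hz).const_mul (2 * B - C))
  have hEq2 : (fun x => α x * ζ' x) =ᶠ[nhds z]
      (fun x => -b * (ζ x) ^ 2 + (2 * B - C) * ζ x) :=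
    Filter.eventually_of_mem hmem (fun x hx => heq2 x hx)
  have e2 : α' z * ζ' z + α z * ζ'' z
      = -b * (2 * ζ z ^ 1 * ζ' z) + (2 * B - C) * ζ' z :=
    (hL2.congr_of_eventuallyEq hEq2.symm).unique hR2
  have h1z := heq1 z hz
  have h2z := heq2 z hz
  constructor
  · linear_combination ζ z * e2 + ζ z * ζ' z * h1z - ζ' z * h2z
  · linear_combination ζ z ^ 2 * e1 + ζ z * e2 - ζ' z * h2z
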